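/- In the upper half-plane model of ℍ², fix A ≥ 0 and let z = (x,y) with y > 0 satisfy: (a) the angle at O(h) = (0, e^h) between z and the boundary point I∞ = (0,0) is at most A e^{-h}, and (b) d(O(h), z) ≥ h. Then for all sufficiently large h (depending only on A): |x| ≤ A and y ≤ 3/2. -/

import Mathlib

open Real

noncomputable section

/-- Inverse hyperbolic cosine. -/
def arcosh (x : ℝ) : ℝ := Real.log (x + Real.sqrt (x ^ 2 - 1))

/-- The hyperbolic distance in the upper half-plane model `{(x,y) : y > 0}` (points
encoded as complex numbers), given by the closed formula
`cosh d(z,w) = 1 + ((x_z − x_w)² + (y_z − y_w)²)/(2 y_z y_w)`. -/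
def dHalf (z w : ℂ) : ℝ :=
  _root_.arcosh (1 + ((z.re - w.re) ^ 2 + (z.im - w.im) ^ 2) / (2 * z.im * w.im))

/-- The conformal isometry from the half-plane to the Poincaré disc sending
`O(h) = (0, e^h)` to the center. -/
def toDisc (h : ℝ) (z : ℂ) : ℂ :=
  ((z.re ^ 2 + z.im ^ 2 - Real.exp (2 * h) : ℝ) + (-2 * z.re * Real.exp h : ℝ) * Complex.I) /
    ((z.re ^ 2 + (z.im + Real.exp h) ^ 2 : ℝ) : ℂ)

/-- The hyperbolic angle at `O(h) = (0, e^h)` between the boundary point `I∞ = (0,0)`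
and the point `z`, computed in the conformal disc model centered at `O(h)`. -/
def hypAngleAt (h : ℝ) (z : ℂ) : ℝ :=
  EuclideanGeometry.angle (toDisc h z) (0 : ℂ) (toDisc h 0)

lemma re_div (a b c : ℝ) : (((a:ℂ) + (b:ℂ)*Complex.I)/((c:ℝ):ℂ)).re = a / c := by
  rw [Complex.div_ofReal_re]; simp

lemma im_div (a b c : ℝ) : (((a:ℂ) + (b:ℂ)*Complex.I)/((c:ℝ):ℂ)).im = b / c := by
  rw [Complex.div_ofReal_im]; simp

lemma exp2 (h : ℝ) : Real.exp (2*h) = Real.exp h ^ 2 := by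
  rw [two_mul, Real.exp_add]; ring

lemma toDisc_eq (h x y : ℝ) :
    toDisc h (x + y * Complex.I)
      = (((x^2 + y^2 - Real.exp h ^2 : ℝ):ℂ) + ((-2*x*Real.exp h : ℝ):ℂ) * Complex.I)
          / (((x^2 + (y + Real.exp h)^2 : ℝ):ℂ)) := by
  unfold toDisc
  rw [show ((x:ℂ) + y*Complex.I).re = x from by simp,
      show ((x:ℂ) + y*Complex.I).im = y from by simp, exp2]

lemma toDisc_zero (h : ℝ) : toDisc h 0 = -1 := by
  have hE : (0:ℝ) < Real.exp h ^ 2 := by positivity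
  unfold toDisc
  simp only [Complex.zero_re, Complex.zero_im, exp2]
  norm_num

lemma hypAngle_eq (h : ℝ) (z : ℂ) :
    hypAngleAt h z = InnerProductGeometry.angle (toDisc h z) (-1 : ℂ) := by
  simp [hypAngleAt, EuclideanGeometry.angle, toDisc_zero, vsub_eq_sub, sub_zero]

lemma inner_neg_one (u : ℂ) : (inner ℝ u (-1 : ℂ) : ℝ) = -u.re := by
  rw [Complex.inner]; simp

lemma inner_self' (u : ℂ) : (inner ℝ u u : ℝ) = u.re^2 + u.im^2 := by
  rw [Complex.inner]; simp [Complex.mul_re, Complex.conj_re, Complex.conj_im]; ring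

lemma norm_sq' (u : ℂ) : ‖u‖^2 = u.re^2 + u.im^2 := by
  rw [Complex.sq_norm, Complex.normSq_apply]; ring

/-- Pure-real algebra: the squared-sine bound forces `x² ≤ A²`. -/
lemma alg_x (A E x y D : ℝ) (hA : 0 ≤ A) (hE0 : 0 < E)
    (hD : D = x^2 + (y+E)^2) (hDpos : 0 < D)
    (hxyE : x^2 + y^2 < E^2)
    (hsq : ((-2*x*E)/D)^2 ≤ (A/E)^2 * (((x^2+y^2-E^2)/D)^2 + ((-2*x*E)/D)^2)) :
    x^2 ≤ A^2 := by
  have hD2 : (0:ℝ) < D^2 := by positivity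
  have hE2 : (0:ℝ) < E^2 := by positivity
  have hDne : D ≠ 0 := ne_of_gt hDpos
  have hEne : E ≠ 0 := ne_of_gt hE0
  have h1 : (-2*x*E)^2 ≤ (A/E)^2 * ((x^2+y^2-E^2)^2 + (-2*x*E)^2) := by
    have hmul := mul_le_mul_of_nonneg_right hsq hD2.le
    have e1 : ((-2*x*E)/D)^2 * D^2 = (-2*x*E)^2 := by field_simp
    have e2 : ((A/E)^2 * (((x^2+y^2-E^2)/D)^2 + ((-2*x*E)/D)^2)) * D^2
        = (A/E)^2 * ((x^2+y^2-E^2)^2 + (-2*x*E)^2) := by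
      field_simp
    calc (-2*x*E)^2 = ((-2*x*E)/D)^2 * D^2 := e1.symm
      _ ≤ _ := hmul
      _ = _ := e2
  have h2 : (-2*x*E)^2 * E^2 ≤ A^2 * ((x^2+y^2-E^2)^2 + (-2*x*E)^2) := by
    rw [div_pow, div_mul_eq_mul_div, le_div_iff₀ hE2] at h1
    linarith
  have hS : x^2 + y^2 + E^2 ≤ 2*E^2 := by linarith
  have hS2 : (x^2+y^2+E^2) * (x^2+y^2+E^2) ≤ (2*E^2) * (2*E^2) :=
    mul_le_mul hS hS (by positivity) (by positivity)
  have hbound : (x^2+y^2-E^2)^2 + (-2*x*E)^2 ≤ 4*E^4 := by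
    nlinarith [hS2, sq_nonneg (y*E)]
  have h3 : (-2*x*E)^2 * E^2 ≤ A^2 * (4*E^4) :=
    le_trans h2 (mul_le_mul_of_nonneg_left hbound (sq_nonneg A))
  have hE4 : (0:ℝ) < E^4 := by positivity
  nlinarith [h3, hE4]

/-- Pure-real algebra: the distance bound forces `y ≤ 3/2`. -/
lemma alg_y (A E x y : ℝ) (hA : 0 ≤ A) (hy : 0 < y) (hE18 : 3*A + 18 ≤ E)
    (hxyE : x^2 + y^2 < E^2) (hx2 : x^2 ≤ A^2)
    (hyE2 : y * E^2 ≤ x^2 + (y+E)^2) : y ≤ 3/2 := by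
  have hE0 : (0:ℝ) < E := by linarith
  by_contra hy32
  push_neg at hy32
  have hyE : y < E := by nlinarith [sq_nonneg x]
  have hy2 : y^2 ≤ y*E := by nlinarith
  have hAsq : 9*A^2 ≤ (E-18)^2 := by nlinarith
  have hE3 : (0:ℝ) ≤ E^2 - 3*E := by nlinarith
  have hmul : (3/2)*(E^2-3*E) ≤ y*(E^2-3*E) :=
    mul_le_mul_of_nonneg_right (le_of_lt hy32) hE3
  have hEE : 18*E ≤ E^2 := by nlinarith
  nlinarith [hyE2, hx2, hy2, hAsq, hmul, hEE]

/-- Geometric lemma: fix `A ≥ 0`. For all sufficiently large `h` (depending only on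
`A`), every point `z = (x,y)` of the upper half-plane whose angle at `O(h) = (0, e^h)`
with the boundary point `I∞ = (0,0)` is at most `A e^{-h}` and whose hyperbolic
distance to `O(h)` is at least `h` satisfies `|x| ≤ A` and `y ≤ 3/2`. -/
theorem cone_minus_ball_in_cylinder (A : ℝ) (hA : 0 ≤ A) :
    ∃ h₀ : ℝ, ∀ h : ℝ, h₀ ≤ h → ∀ x y : ℝ, 0 < y →
      hypAngleAt h (x + y * Complex.I) ≤ A * Real.exp (-h) →
      h ≤ dHalf (Complex.I * Real.exp h) (x + y * Complex.I) →
      |x| ≤ A ∧ y ≤ 3 / 2 := by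
  refine ⟨Real.log (3*A + 18), fun h hh x y hy hang hdist => ?_⟩
  have hE0 : (0:ℝ) < Real.exp h := Real.exp_pos h
  set E := Real.exp h with hEdef
  have hE18 : 3*A + 18 ≤ E := by
    have := Real.exp_le_exp.mpr hh
    rwa [Real.exp_log (by linarith)] at this
  set u := toDisc h (x + y*Complex.I) with hu
  set θ := hypAngleAt h (x + y*Complex.I) with hθ
  have hθeq : θ = InnerProductGeometry.angle u (-1 : ℂ) := hypAngle_eq h _
  have hDpos : (0:ℝ) < x^2 + (y+E)^2 := by positivity
  have hre : u.re = (x^2 + y^2 - E^2) / (x^2 + (y+E)^2) := by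
    rw [hu, toDisc_eq, re_div, ← hEdef]
  have him : u.im = (-2*x*E) / (x^2 + (y+E)^2) := by
    rw [hu, toDisc_eq, im_div, ← hEdef]
  have hAE : A * Real.exp (-h) = A / E := by rw [Real.exp_neg, ← hEdef]; ring
  clear_value u θ E
  have hθ0 : 0 ≤ θ := hθeq ▸ InnerProductGeometry.angle_nonneg _ _
  have hθpi : θ ≤ π := hθeq ▸ InnerProductGeometry.angle_le_pi _ _
  rw [hAE] at hang
  have hAE3 : A / E ≤ 1/3 := by
    rw [div_le_iff₀ hE0]; nlinarith
  have hAEnn : 0 ≤ A / E := div_nonneg hA hE0.le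
  have hcosθ : Real.cos θ = (-u.re) / ‖u‖ := by
    rw [hθeq, InnerProductGeometry.cos_angle, inner_neg_one]
    simp
  have hcpos : 0 < Real.cos θ := by
    have h1 : Real.cos (A/E) ≤ Real.cos θ :=
      Real.cos_le_cos_of_nonneg_of_le_pi hθ0 (by linarith [Real.pi_gt_three]) hang
    have h2 : 0 < Real.cos (A/E) :=
      Real.cos_pos_of_mem_Ioo ⟨by linarith [Real.pi_gt_three], by linarith [Real.pi_gt_three]⟩
    linarith
  have hunorm : 0 < ‖u‖ := by
    rcases eq_or_lt_of_le (norm_nonneg u) with h0 | h0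
    · rw [hcosθ, ← h0] at hcpos; simp at hcpos
    · exact h0
  have hure : u.re < 0 := by
    by_contra hcon
    push_neg at hcon
    rw [hcosθ] at hcpos
    nlinarith [div_nonpos_of_nonpos_of_nonneg (by linarith : -u.re ≤ 0) hunorm.le]
  have hsinθ : Real.sin θ * ‖u‖ = |u.im| := by
    have hsa := InnerProductGeometry.sin_angle_mul_norm_mul_norm u (-1 : ℂ)
    rw [← hθeq] at hsa
    rw [inner_neg_one u, inner_self' u, inner_self' (-1 : ℂ), norm_neg, norm_one, mul_one] at hsa
    rw [show ((-1:ℂ).re^2 + (-1:ℂ).im^2 : ℝ) = 1 from by simp] at hsa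
    rw [show (u.re^2 + u.im^2) * 1 - -u.re * -u.re = u.im^2 from by ring,
      Real.sqrt_sq_eq_abs] at hsa
    exact hsa
  have hsinle : |u.im| ≤ (A/E) * ‖u‖ := by
    rw [← hsinθ]
    exact mul_le_mul_of_nonneg_right (le_trans (Real.sin_le hθ0) hang) hunorm.le
  have hxyE : x^2 + y^2 < E^2 := by
    rw [hre] at hure
    rcases div_neg_iff.mp hure with ⟨h1, h2⟩ | ⟨h1, h2⟩
    · linarith
    · linarith
  have hsq : u.im^2 ≤ (A/E)^2 * (u.re^2 + u.im^2) := by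
    have h1 : |u.im|^2 ≤ ((A/E) * ‖u‖)^2 :=
      pow_le_pow_left₀ (abs_nonneg _) hsinle 2
    rw [sq_abs, mul_pow, norm_sq'] at h1
    linarith
  rw [hre, him] at hsq
  have hx2 : x^2 ≤ A^2 := alg_x A E x y _ hA hE0 rfl hDpos hxyE hsq
  have hxA : |x| ≤ A := by
    have := Real.sqrt_le_sqrt hx2
    rwa [Real.sqrt_sq_eq_abs, Real.sqrt_sq hA] at this
  refine ⟨hxA, ?_⟩
  clear hsq hre him hsinle hsinθ hcosθ hcpos hunorm hure hθeq hθ0 hθpi hAE3 hAEnn hang hθ hu u θ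
  rw [dHalf, show (Complex.I * (E:ℂ)).re = 0 from by simp,
      show (Complex.I * (E:ℂ)).im = E from by simp,
      show ((x:ℂ) + y*Complex.I).re = x from by simp,
      show ((x:ℂ) + y*Complex.I).im = y from by simp] at hdist
  set q := (0 - x)^2 + (E - y)^2 with hq
  set t := 1 + q / (2*E*y) with ht
  clear_value q t
  have hEy : (0:ℝ) < 2*E*y := by positivity
  have ht1 : 1 ≤ t := by
    have hq0 : 0 ≤ q := by rw [hq]; positivity
    have h0 : 0 ≤ q / (2*E*y) := div_nonneg hq0 hEy.le
    rw [ht]; linarith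
  have hs0 : 0 < t + Real.sqrt (t^2 - 1) := by
    have := Real.sqrt_nonneg (t^2-1); linarith
  have hEs : E ≤ t + Real.sqrt (t^2-1) := by
    have h1 : E ≤ Real.exp (_root_.arcosh t) := hEdef ▸ Real.exp_le_exp.mpr hdist
    rwa [_root_.arcosh, Real.exp_log hs0] at h1
  have hst : Real.sqrt (t^2-1) ≤ t := by
    calc Real.sqrt (t^2-1) ≤ Real.sqrt (t^2) := Real.sqrt_le_sqrt (by linarith)
    _ = t := Real.sqrt_sq (by linarith)
  have hE2t : E ≤ 2*t := by linarith
  have hyE2 : y * E^2 ≤ x^2 + (y+E)^2 := by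
    have h1 : E * (2*E*y) ≤ 2*t * (2*E*y) := mul_le_mul_of_nonneg_right hE2t hEy.le
    have h2 : t * (2*E*y) = 2*E*y + q := by
      rw [ht]; field_simp
    nlinarith [h1, h2, hq]
  exact alg_y A E x y hA hy hE18 hxyE hx2 hyE2

end
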